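/- With the setup of the constrained Fermat-Weber problem, a point x̄ ∈ C \ {a₁,...,aₘ} is the optimal solution if and only if ⟨T(x̄) - x̄, x - x̄⟩ ≤ 0 for all x ∈ C, where T is the Weiszfeld operator. -/

import Mathlib

open Finset
open scoped RealInnerProductSpace

section Aux

variable {H : Type*} [NormedAddCommGroup H] [InnerProductSpace ℝ H]

lemma hasFDerivAt_norm_sub {a x : H} (hx : x ≠ a) :
    HasFDerivAt (fun y => ‖y - a‖) (‖x - a‖⁻¹ • innerSL ℝ (x - a)) x := by
  have hne : x - a ≠ 0 := sub_ne_zero.mpr hx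
  have hn : ‖x - a‖ ≠ 0 := norm_ne_zero_iff.mpr hne
  have h1 : HasFDerivAt (fun y : H => y - a) (ContinuousLinearMap.id ℝ H) x :=
    (hasFDerivAt_id x).sub_const a
  have h2 : HasFDerivAt (fun y => ‖y - a‖ ^ 2)
      (2 • (innerSL ℝ (x - a)).comp (ContinuousLinearMap.id ℝ H)) x := h1.norm_sq
  have h3 : ‖x - a‖ ^ 2 ≠ 0 := pow_ne_zero _ hn
  have h4 := h2.sqrt h3
  have hfun : ∀ y : H, Real.sqrt (‖y - a‖ ^ 2) = ‖y - a‖ := fun y =>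
    Real.sqrt_sq (norm_nonneg _)
  have hmap : (1 / (2 * ‖x - a‖)) •
      ((2 : ℕ) • (innerSL ℝ (x - a)).comp (ContinuousLinearMap.id ℝ H)) =
      ‖x - a‖⁻¹ • innerSL ℝ (x - a) := by
    ext v
    simp only [ContinuousLinearMap.coe_smul', Pi.smul_apply, ContinuousLinearMap.coe_comp',
      Function.comp_apply, ContinuousLinearMap.coe_id', id_eq, smul_eq_mul,
      nsmul_eq_mul, Nat.cast_ofNat,
      ContinuousLinearMap.mul_apply']
    field_simp
    simp only [Pi.mul_apply, Pi.ofNat_apply, Function.comp_apply, id_eq]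
  simp only [hfun] at h4
  rwa [hmap] at h4

lemma convexOn_grad_ineq {f : H → ℝ} (hf : ConvexOn ℝ Set.univ f) {x : H} {L : H →L[ℝ] ℝ}
    (hL : HasFDerivAt f L x) (y : H) : L (y - x) ≤ f y - f x := by
  set d := y - x with hd
  have hline : HasDerivAt (fun t : ℝ => x + t • d) d 0 := by
    simpa using ((hasDerivAt_id (0 : ℝ)).smul_const d).const_add x
  have hL' : HasFDerivAt f L ((fun t : ℝ => x + t • d) 0) := by simpa using hL
  have hφ : HasDerivAt (fun t : ℝ => f (x + t • d)) (L d) 0 := by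
    simpa [Function.comp_def] using hL'.comp_hasDerivAt 0 hline
  have htend := hasDerivAt_iff_tendsto_slope.mp hφ
  have htend' : Filter.Tendsto (slope (fun t : ℝ => f (x + t • d)) 0) (nhdsWithin 0 (Set.Ioi 0))
      (nhds (L d)) :=
    htend.mono_left (nhdsWithin_mono _ fun t ht => ne_of_gt ht)
  refine le_of_tendsto htend' ?_
  filter_upwards [Ioo_mem_nhdsGT (by norm_num : (0 : ℝ) < 1)] with t ht
  have hconv := hf.2 (Set.mem_univ x) (Set.mem_univ y)
    (by linarith [ht.2] : (0:ℝ) ≤ 1 - t) ht.1.le (by ring)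
  have hx' : (1 - t) • x + t • y = x + t • d := by
    rw [hd, smul_sub, sub_smul, one_smul]; abel
  rw [hx'] at hconv
  have hφ0 : (fun t : ℝ => f (x + t • d)) 0 = f x := by simp
  rw [slope_def_field]
  simp only [zero_smul, add_zero, sub_zero]
  rw [div_le_iff₀ ht.1]
  simp only [smul_eq_mul] at hconv
  nlinarith [ht.1]

lemma fermatweber_convexOn {m : ℕ} (w : Fin m → ℝ) (hw : ∀ i, 0 ≤ w i) (a : Fin m → H) :
    ConvexOn ℝ Set.univ (fun x => ∑ i, w i * ‖x - a i‖) := by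
  refine ⟨convex_univ, fun x _ y _ t s ht hs hts => ?_⟩
  simp only [smul_eq_mul, Finset.mul_sum, ← Finset.sum_add_distrib]
  refine Finset.sum_le_sum fun i _ => ?_
  have key : t • x + s • y - a i = t • (x - a i) + s • (y - a i) := by
    have h1 : t • (x - a i) + s • (y - a i) = t • x + s • y - (t + s) • a i := by
      rw [smul_sub, smul_sub, add_smul]; abel
    rw [h1, hts, one_smul]
  rw [key]
  calc w i * ‖t • (x - a i) + s • (y - a i)‖
      ≤ w i * (t * ‖x - a i‖ + s * ‖y - a i‖) := by
        refine mul_le_mul_of_nonneg_left ?_ (hw i)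
        calc ‖t • (x - a i) + s • (y - a i)‖ ≤ ‖t • (x - a i)‖ + ‖s • (y - a i)‖ :=
              norm_add_le _ _
          _ = t * ‖x - a i‖ + s * ‖y - a i‖ := by
              rw [norm_smul, norm_smul, Real.norm_of_nonneg ht, Real.norm_of_nonneg hs]
    _ = t * (w i * ‖x - a i‖) + s * (w i * ‖y - a i‖) := by ring

end Aux

/-- The Weiszfeld operator. -/
noncomputable def weiszfeldT {H : Type*} [NormedAddCommGroup H] [InnerProductSpace ℝ H]
    {m : ℕ} (w : Fin m → ℝ) (a : Fin m → H) (x : H) : H :=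
  (∑ i, w i / ‖x - a i‖)⁻¹ • ∑ i, (w i / ‖x - a i‖) • a i

theorem isMinOn_iff_variational_inequality
    {H : Type*} [NormedAddCommGroup H] [InnerProductSpace ℝ H] [CompleteSpace H]
    {m : ℕ} (hm : 1 ≤ m) (a : Fin m → H) (w : Fin m → ℝ)
    (hw : ∀ i, 0 < w i)
    (hcol : ¬ ∃ u v : H, ∀ i, ∃ t : ℝ, a i = u + t • v)
    (C : Set H) (hCne : C.Nonempty) (hCclosed : IsClosed C) (hCconv : Convex ℝ C)
    (xbar : H) (hxC : xbar ∈ C) (hxA : xbar ∉ Set.range a) :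
    IsMinOn (fun x => ∑ i, w i * ‖x - a i‖) C xbar ↔
      ∀ x ∈ C, ⟪weiszfeldT w a xbar - xbar, x - xbar⟫ ≤ 0 := by
  have hxa : ∀ i, xbar ≠ a i := fun i h => hxA ⟨i, h.symm⟩
  have hnorm_pos : ∀ i, 0 < ‖xbar - a i‖ := fun i =>
    norm_pos_iff.mpr (sub_ne_zero.mpr (hxa i))
  set r : Fin m → ℝ := fun i => w i / ‖xbar - a i‖ with hr
  have hrpos : ∀ i, 0 < r i := fun i => div_pos (hw i) (hnorm_pos i)
  set c : ℝ := ∑ i, r i with hcdef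
  have hc : 0 < c :=
    Finset.sum_pos (fun i _ => hrpos i)
      (by have : Nonempty (Fin m) := Fin.pos_iff_nonempty.mp hm
          exact Finset.univ_nonempty)
  set g : H := ∑ i, r i • (xbar - a i) with hgdef
  have hgT : g = c • xbar - ∑ i, r i • a i := by
    simp only [hgdef, smul_sub, Finset.sum_sub_distrib, hcdef, Finset.sum_smul]
  have hT : weiszfeldT w a xbar - xbar = -(c⁻¹ • g) := by
    unfold weiszfeldT
    rw [hgT, smul_sub, neg_sub, smul_smul, inv_mul_cancel₀ hc.ne', one_smul]
  -- the derivative of the objective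
  have hL : HasFDerivAt (fun x => ∑ i, w i * ‖x - a i‖) (innerSL ℝ g) xbar := by
    have hsum : HasFDerivAt (fun x => ∑ i, w i * ‖x - a i‖)
        (∑ i, w i • (‖xbar - a i‖⁻¹ • innerSL ℝ (xbar - a i))) xbar :=
      HasFDerivAt.fun_sum fun i _ => (hasFDerivAt_norm_sub (hxa i)).const_mul (w i)
    convert hsum using 1
    ext v
    simp only [innerSL_apply_apply, hgdef, sum_inner, real_inner_smul_left,
      ContinuousLinearMap.coe_sum', Finset.sum_apply, ContinuousLinearMap.coe_smul',
      Pi.smul_apply, smul_eq_mul]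
    refine Finset.sum_congr rfl fun i _ => ?_
    rw [hr]
    field_simp
  have hinner : ∀ x : H, ⟪weiszfeldT w a xbar - xbar, x - xbar⟫ =
      -(c⁻¹ * ⟪g, x - xbar⟫) := by
    intro x
    rw [hT, inner_neg_left, real_inner_smul_left]
  constructor
  · intro hmin x hx
    have hloc : IsLocalMinOn (fun x => ∑ i, w i * ‖x - a i‖) C xbar :=
      hmin.filter_mono inf_le_right
    have hcone : x - xbar ∈ posTangentConeAt C xbar :=
      sub_mem_posTangentConeAt_of_segment_subset (hCconv.segment_subset hxC hx)
    have h0 := hloc.hasFDerivWithinAt_nonneg hL.hasFDerivWithinAt hcone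
    simp only [innerSL_apply_apply] at h0
    rw [hinner x]
    have : 0 ≤ c⁻¹ * ⟪g, x - xbar⟫ := mul_nonneg (inv_nonneg.mpr hc.le) h0
    linarith
  · intro hVI
    rw [isMinOn_iff]
    intro x hx
    have h0 := hVI x hx
    rw [hinner x] at h0
    have h1 : 0 ≤ ⟪g, x - xbar⟫ := by
      have h2 : 0 ≤ c⁻¹ * ⟪g, x - xbar⟫ := by linarith
      exact nonneg_of_mul_nonneg_right h2 (inv_pos.mpr hc)
    have key := convexOn_grad_ineq (fermatweber_convexOn w (fun i => (hw i).le) a) hL x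
    simp only [innerSL_apply_apply] at key
    linarith
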